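/- For every real q with 0 < q < 1, every integer k ≥ 0, and every complex number z, the k-th term of the series for A_q((1−q)z) is dominated by the k-th term of the exponential series: (1−q)^k · q^{k²} · |z|^k / (q;q)_k ≤ (q|z|)^k / k!. -/

import Mathlib

/-- The finite q-Pochhammer symbol `(a;q)_n = ∏_{j=0}^{n-1} (1 - a q^j)` in `ℝ`. -/
noncomputable def qPochR (q a : ℝ) (n : ℕ) : ℝ :=
  ∏ j ∈ Finset.range n, (1 - a * q ^ j)

lemma factor_lb (q : ℝ) (hq0 : 0 < q) (hq1 : q < 1) (j : ℕ) :
    (1 - q) * ((j + 1 : ℕ) : ℝ) * q ^ j ≤ 1 - q * q ^ j := by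
  have h : 1 - q * q ^ j = (1 - q) * ∑ i ∈ Finset.range (j + 1), q ^ i := by
    have hg := geom_sum_mul q (j + 1)
    linear_combination hg
  rw [h]
  have hsum : ((j + 1 : ℕ) : ℝ) * q ^ j ≤ ∑ i ∈ Finset.range (j + 1), q ^ i := by
    calc ((j + 1 : ℕ) : ℝ) * q ^ j = ∑ _i ∈ Finset.range (j + 1), q ^ j := by
          simp [mul_comm]
      _ ≤ ∑ i ∈ Finset.range (j + 1), q ^ i := by
          apply Finset.sum_le_sum
          intro i hi
          exact pow_le_pow_of_le_one hq0.le hq1.le (Nat.le_of_lt_succ (Finset.mem_range.mp hi))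
  calc (1 - q) * ((j + 1 : ℕ) : ℝ) * q ^ j = (1 - q) * (((j + 1 : ℕ) : ℝ) * q ^ j) := by ring
    _ ≤ (1 - q) * ∑ i ∈ Finset.range (j + 1), q ^ i :=
        mul_le_mul_of_nonneg_left hsum (by linarith)

lemma qPoch_lb (q : ℝ) (hq0 : 0 < q) (hq1 : q < 1) (k : ℕ) :
    (1 - q) ^ k * (Nat.factorial k : ℝ) * q ^ (k * (k - 1) / 2) ≤ qPochR q q k := by
  have h : (1 - q) ^ k * (Nat.factorial k : ℝ) * q ^ (k * (k - 1) / 2) =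
      ∏ j ∈ Finset.range k, ((1 - q) * ((j + 1 : ℕ) : ℝ) * q ^ j) := by
    rw [Finset.prod_mul_distrib, Finset.prod_mul_distrib, Finset.prod_const,
      Finset.prod_pow_eq_pow_sum, Finset.sum_range_id, ← Nat.cast_prod,
      Finset.prod_range_add_one_eq_factorial]
    simp
  rw [h]
  apply Finset.prod_le_prod
  · intro j _
    have h1q : (0:ℝ) ≤ 1 - q := by linarith
    exact mul_nonneg (mul_nonneg h1q (by positivity)) (by positivity)
  · intro j _
    exact factor_lb q hq0 hq1 j

theorem term_le_exp_term (q : ℝ) (hq0 : 0 < q) (hq1 : q < 1) (k : ℕ) (z : ℂ) :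
    (1 - q) ^ k * q ^ (k ^ 2) * ‖z‖ ^ k / qPochR q q k ≤
      (q * ‖z‖) ^ k / Nat.factorial k := by
  set T := k * (k - 1) / 2 with hT
  have h1q : (0:ℝ) < 1 - q := by linarith
  have hfac : (0:ℝ) < (Nat.factorial k : ℝ) := by positivity
  have hP : (0:ℝ) < (1 - q) ^ k * (Nat.factorial k : ℝ) * q ^ T := by
    have := pow_pos h1q k
    have := pow_pos hq0 T
    positivity
  have hlb := qPoch_lb q hq0 hq1 k
  have hPpos : (0:ℝ) < qPochR q q k := lt_of_lt_of_le hP hlb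
  have hnum : (0:ℝ) ≤ (1 - q) ^ k * q ^ (k ^ 2) * ‖z‖ ^ k := by positivity
  have hexp : k ^ 2 = T + k + T := by
    rw [hT]
    rcases k with _ | n
    · simp
    · have h2 : 2 * ((n + 1) * n / 2) = (n + 1) * n := by
        apply Nat.two_mul_div_two_of_even
        simpa [Nat.mul_comm] using Nat.even_mul_succ_self n
      have h3 : (n + 1) ^ 2 = (n + 1) * n + (n + 1) := by ring
      simp only [Nat.succ_sub_one]
      rw [h3]
      generalize (n + 1) * n = u at h2 ⊢
      omega
  have key : (1 - q) ^ k * q ^ (k ^ 2) * ‖z‖ ^ k /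
      ((1 - q) ^ k * (Nat.factorial k : ℝ) * q ^ T)
      = (q * ‖z‖) ^ k / Nat.factorial k * q ^ T := by
    rw [hexp, pow_add, pow_add, mul_pow]
    field_simp
  calc (1 - q) ^ k * q ^ (k ^ 2) * ‖z‖ ^ k / qPochR q q k
      ≤ (1 - q) ^ k * q ^ (k ^ 2) * ‖z‖ ^ k /
        ((1 - q) ^ k * (Nat.factorial k : ℝ) * q ^ T) :=
        div_le_div_of_nonneg_left hnum hP hlb
    _ = (q * ‖z‖) ^ k / Nat.factorial k * q ^ T := key
    _ ≤ (q * ‖z‖) ^ k / Nat.factorial k * 1 := by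
        apply mul_le_mul_of_nonneg_left (pow_le_one₀ hq0.le hq1.le)
        positivity
    _ = (q * ‖z‖) ^ k / Nat.factorial k := by ring
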